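/- The vector fields X = λ∂₁ − u₁∂₃ and Y = (λ−1)∂₂ − u₂∂₃ commute for all λ ∉ {0,1} if and only if u satisfies u₁₂ + u₂u₁₃ − u₁u₂₃ = 0. -/

import Mathlib

/-- Partial derivative in the `i`-th coordinate direction. -/
noncomputable def pd (i : Fin 3) (f : (Fin 3 → ℝ) → ℝ) (x : Fin 3 → ℝ) : ℝ :=
  fderiv ℝ f x (Pi.single i 1)

/-- Lie bracket of vector fields on `ℝ³`, given by their coefficient functions. -/
noncomputable def lieBracket (X Y : (Fin 3 → ℝ) → Fin 3 → ℝ)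
    (x : Fin 3 → ℝ) (i : Fin 3) : ℝ :=
  ∑ j : Fin 3, (X x j * pd j (fun y => Y y i) x - Y x j * pd j (fun y => X y i) x)

lemma pd_const (i : Fin 3) (c : ℝ) (x : Fin 3 → ℝ) : pd i (fun _ => c) x = 0 := by
  simp [pd]

lemma pd_neg (i : Fin 3) (f : (Fin 3 → ℝ) → ℝ) (x : Fin 3 → ℝ) :
    pd i (fun y => -f y) x = -pd i f x := by
  simp [pd, fderiv_neg]

/-- The vector fields `X = λ∂₁ − u₁∂₃` and `Y = (λ−1)∂₂ − u₂∂₃` commute for all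
`λ ∉ {0, 1}` iff `u` satisfies `u₁₂ + u₂u₁₃ − u₁u₂₃ = 0`. -/
theorem lax_pair_11_22
    (u : (Fin 3 → ℝ) → ℝ) (hu : ContDiff ℝ 2 u) :
    (∀ l : ℝ, l ≠ 0 → l ≠ 1 → ∀ x, ∀ i : Fin 3,
      lieBracket
        (fun x => ![l, 0, -(pd 0 u x)])
        (fun x => ![0, l - 1, -(pd 1 u x)])
        x i = 0) ↔
    (∀ x, pd 0 (pd 1 u) x + pd 1 u x * pd 0 (pd 2 u) x
        - pd 0 u x * pd 1 (pd 2 u) x = 0) := by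
  have hu1 : Differentiable ℝ u := hu.differentiable (by norm_num)
  have hfd : ContDiff ℝ 1 (fderiv ℝ u) := hu.fderiv_right (by norm_num)
  have hfd' : Differentiable ℝ (fderiv ℝ u) := hfd.differentiable (by norm_num)
  have hpdpd : ∀ (i j : Fin 3) x, pd i (pd j u) x
      = fderiv ℝ (fderiv ℝ u) x (Pi.single i 1) (Pi.single j 1) := by
    intro i j x
    set L := ContinuousLinearMap.apply ℝ ℝ (Pi.single j 1 : Fin 3 → ℝ) with hL
    have h1 := L.hasFDerivAt.comp x (hfd' x).hasFDerivAt
    have h2 : fderiv ℝ (pd j u) x = L.comp (fderiv ℝ (fderiv ℝ u) x) := h1.fderiv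
    rw [pd, h2]
    rfl
  have hsymm : ∀ (i j : Fin 3) x, pd i (pd j u) x = pd j (pd i u) x := by
    intro i j x
    rw [hpdpd, hpdpd]
    exact second_derivative_symmetric (fun y => (hu1 y).hasFDerivAt)
      (hfd' x).hasFDerivAt _ _
  have key : ∀ (l : ℝ) x,
      lieBracket (fun x => ![l, 0, -(pd 0 u x)]) (fun x => ![0, l - 1, -(pd 1 u x)]) x 2
      = - (pd 0 (pd 1 u) x + pd 1 u x * pd 0 (pd 2 u) x - pd 0 u x * pd 1 (pd 2 u) x) := by
    intro l x
    simp only [lieBracket, Fin.sum_univ_three, Matrix.cons_val_zero, Matrix.cons_val_one,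
      Matrix.head_cons, Matrix.cons_val_two, Matrix.tail_cons, pd_neg]
    have e1 := hsymm 0 1 x
    have e2 := hsymm 2 1 x
    have e3 := hsymm 2 0 x
    have e4 := hsymm 1 2 x
    have e5 := hsymm 0 2 x
    rw [← e1, e2, e3]
    ring
  constructor
  · intro h x
    have := key 2 x
    rw [h 2 (by norm_num) (by norm_num) x 2] at this
    linarith
  · intro h l hl0 hl1 x i
    fin_cases i
    · simp only [lieBracket, Fin.sum_univ_three, Matrix.cons_val_zero, Matrix.cons_val_one,
        Matrix.head_cons, Matrix.cons_val_two, Matrix.tail_cons, pd_const]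
      ring_nf
      simp [pd_const]
    · simp only [lieBracket, Fin.sum_univ_three, Matrix.cons_val_zero, Matrix.cons_val_one,
        Matrix.head_cons, Matrix.cons_val_two, Matrix.tail_cons, pd_const]
      ring_nf
      simp [pd_const]
    · rw [show (⟨2, by norm_num⟩ : Fin 3) = 2 from rfl, key l x, h x]
      ring
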